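/- Let $\mathfrak{E}_S(X) := \operatorname{esssup}_{\mathbb{Q}\in\mathcal{Q}} \mathbb{E}^{\mathbb{Q}}(X \mid \mathcal{F}(S))$ where $\mathcal{Q} = \{\bigotimes_m \mathbb{Q}^{(m)} : \mathbb{Q}^{(m)} \in \mathcal{Q}^{(m)}\}$ on a product probability space. If $Y(\omega^{(1)},\dots,\omega^{(M)}) = X^{(1)}(\omega^{(1)}) \cdots X^{(M)}(\omega^{(M)})$ where each $X^{(m)}$ is a nonnegative bounded random variable on $(\Omega^{(m)}, \mathcal{F}^{(m)})$, then $\mathfrak{E}_S(Y) = \prod_{m=1}^M \mathcal{E}^{(m)}(X^{(m)} \mid \mathcal{F}^{(m)}_{S^{(m)}})$ a.s., where $\mathcal{E}^{(m)}(\cdot \mid \mathcal{F}^{(m)}_{S^{(m)}}) = \operatorname{esssup}_{\mathbb{Q}\in\mathcal{Q}^{(m)}}\mathbb{E}^{\mathbb{Q}}(\cdot \mid \mathcal{F}^{(m)}_{S^{(m)}})$. -/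

import Mathlib

open MeasureTheory Filter Set

universe u v

section Helpers

private lemma ciSup_mul_le_aux {κ : Type*} [Nonempty κ] (u : κ → ℝ)
    (hbdd : BddAbove (Set.range u)) {b c : ℝ} (hb : 0 ≤ b)
    (h0 : ∀ k, 0 ≤ u k) (h : ∀ k, u k * b ≤ c) : (⨆ k, u k) * b ≤ c := by
  rcases eq_or_lt_of_le hb with hb0 | hb0
  · have hc : 0 ≤ c := by simpa [← hb0] using h (Classical.arbitrary κ)
    simpa [← hb0] using hc
  · have h1 : (⨆ k, u k) ≤ c / b := ciSup_le fun k => (le_div_iff₀ hb0).2 (h k)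
    calc (⨆ k, u k) * b ≤ (c / b) * b := mul_le_mul_of_nonneg_right h1 hb
    _ = c := div_mul_cancel₀ _ (ne_of_gt hb0)

private lemma prod_ciSup_le {ι : Type*} [Fintype ι] (a : ι → ℕ → ℝ) (K : ι → ℝ)
    (h0 : ∀ i n, 0 ≤ a i n) (hK : ∀ i n, a i n ≤ K i) {c : ℝ}
    (hc : ∀ σ : ι → ℕ, (∏ i, a i (σ i)) ≤ c) : (∏ i, ⨆ n, a i n) ≤ c := by
  classical
  have hbdd : ∀ i, BddAbove (Set.range (a i)) := fun i =>
    ⟨K i, by rintro _ ⟨n, rfl⟩; exact hK i n⟩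
  have key : ∀ s : Finset ι,
      (∏ i ∈ s, ⨆ n, a i n) ≤ ⨆ σ : ι → ℕ, ∏ i ∈ s, a i (σ i) := by
    intro s
    induction s using Finset.induction_on with
    | empty => simp
    | @insert j s hj ih =>
      have hbddσ : ∀ t : Finset ι, BddAbove (Set.range fun σ : ι → ℕ => ∏ i ∈ t, a i (σ i)) := by
        intro t
        refine ⟨∏ i ∈ t, K i, ?_⟩
        rintro _ ⟨σ, rfl⟩
        exact Finset.prod_le_prod (fun i _ => h0 i _) (fun i _ => hK i _)
      rw [Finset.prod_insert hj]
      have step1 : (⨆ n, a j n) * (∏ i ∈ s, ⨆ n, a i n)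
          ≤ (⨆ n, a j n) * ⨆ σ : ι → ℕ, ∏ i ∈ s, a i (σ i) := by
        refine mul_le_mul_of_nonneg_left ih ?_
        exact le_trans (h0 j 0) (le_ciSup (hbdd j) 0)
      refine step1.trans ?_
      rw [mul_comm]
      refine ciSup_mul_le_aux _ (hbddσ s) (le_trans (h0 j 0) (le_ciSup (hbdd j) 0))
        (fun σ => Finset.prod_nonneg fun i _ => h0 i _) ?_
      intro σ
      rw [mul_comm]
      refine ciSup_mul_le_aux (a j) (hbdd j)
        (Finset.prod_nonneg fun i _ => h0 i _) (h0 j) ?_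
      intro n
      have heq : a j n * ∏ i ∈ s, a i (σ i)
          = ∏ i ∈ insert j s, a i (Function.update σ j n i) := by
        rw [Finset.prod_insert hj, Function.update_self]
        congr 1
        refine Finset.prod_congr rfl fun i hi => ?_
        rw [Function.update_of_ne (by rintro rfl; exact hj hi)]
      rw [heq]
      exact le_ciSup (hbddσ (insert j s)) (Function.update σ j n)
  exact (key Finset.univ).trans (ciSup_le hc)

private lemma absolutelyContinuous_pi_fin : ∀ {n : ℕ} {α : Fin n → Type u}
    [inst : ∀ i, MeasurableSpace (α i)] (μ ν : ∀ i, Measure (α i))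
    [∀ i, IsProbabilityMeasure (μ i)] [∀ i, IsProbabilityMeasure (ν i)],
    (∀ i, μ i ≪ ν i) → Measure.pi μ ≪ Measure.pi ν := by
  intro n
  induction n with
  | zero =>
    intro α inst μ ν _ _ _
    rw [Measure.pi_of_empty, Measure.pi_of_empty]
  | succ n ih =>
    intro α inst μ ν hμp hνp h
    have hμ := (measurePreserving_piFinSuccAbove μ 0).symm _
    have hν := (measurePreserving_piFinSuccAbove ν 0).symm _
    rw [← hμ.map_eq, ← hν.map_eq]
    refine Measure.AbsolutelyContinuous.map ?_
      (MeasurableEquiv.piFinSuccAbove α 0).symm.measurable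
    exact (h 0).prod (ih _ _ (fun j => h _))

private lemma absolutelyContinuous_pi {ι : Type v} [Fintype ι] {Ω : ι → Type u}
    [∀ i, MeasurableSpace (Ω i)] (μ ν : ∀ i, Measure (Ω i))
    [∀ i, IsProbabilityMeasure (μ i)] [∀ i, IsProbabilityMeasure (ν i)]
    (h : ∀ i, μ i ≪ ν i) : Measure.pi μ ≪ Measure.pi ν := by
  let e := (Fintype.equivFin ι).symm
  have hμ := measurePreserving_piCongrLeft μ e
  have hν := measurePreserving_piCongrLeft ν e
  rw [← hμ.map_eq, ← hν.map_eq]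
  exact Measure.AbsolutelyContinuous.map
    (absolutelyContinuous_pi_fin _ _ (fun i => h (e i)))
    (MeasurableEquiv.piCongrLeft Ω e).measurable

variable {ι : Type v} [Fintype ι] {Ω : ι → Type u}
  (m' : ∀ i, MeasurableSpace (Ω i)) [mΩ : ∀ i, MeasurableSpace (Ω i)]
  (hm' : ∀ i, m' i ≤ mΩ i)
  (q : ∀ i, Measure (Ω i)) [∀ i, IsProbabilityMeasure (q i)]

include hm' in
private lemma pi_le_pi : (MeasurableSpace.pi (m := m')) ≤ (MeasurableSpace.pi (m := mΩ)) :=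
  iSup_mono fun i => MeasurableSpace.comap_mono (hm' i)

/-- Integral of a product of marginal functions over a box factorizes. -/
private lemma box_integral (F : ∀ i, Ω i → ℝ) (hFmeas : ∀ i, Measurable (F i))
    (s : ∀ i, Set (Ω i)) (hs : ∀ i, MeasurableSet (s i)) :
    ∫ ω in Set.univ.pi s, ∏ i, F i (ω i) ∂Measure.pi q
      = ∏ i, ∫ x in s i, F i x ∂q i := by
  rw [← integral_indicator (MeasurableSet.univ_pi hs)]
  have hsplit : (Set.univ.pi s).indicator (fun ω : ∀ i, Ω i => ∏ i, F i (ω i))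
      = fun ω => ∏ i, (s i).indicator (F i) (ω i) := by
    funext ω
    by_cases hω : ω ∈ Set.univ.pi s
    · rw [Set.indicator_of_mem hω]
      exact Finset.prod_congr rfl fun i _ =>
        (Set.indicator_of_mem (hω i (Set.mem_univ i)) _).symm
    · rw [Set.indicator_of_notMem hω]
      obtain ⟨i, hi⟩ : ∃ i, ω i ∉ s i := by
        by_contra hcon
        push_neg at hcon
        exact hω fun i _ => hcon i
      exact (Finset.prod_eq_zero (Finset.mem_univ i)
        (by rw [Set.indicator_of_notMem hi])).symm
  rw [hsplit]
  letI : ∀ i, MeasureSpace (Ω i) := fun i => { volume := q i }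
  letI : ∀ i, SigmaFinite (volume : Measure (Ω i)) :=
    fun i => inferInstanceAs (SigmaFinite (q i))
  have key := MeasureTheory.integral_fintype_prod_eq_prod (𝕜 := ℝ)
    (fun i => (s i).indicator (F i)) (μ := q)
  have hvol : (volume : Measure (∀ i, Ω i)) = Measure.pi q := rfl
  rw [key]
  exact Finset.prod_congr rfl fun i _ => integral_indicator (hs i)

set_option maxHeartbeats 1000000 in
include hm' in
/-- Conditional expectation of a product of marginal random variables with respect to the
product of sub-σ-algebras, under a product measure, factorizes. -/
private lemma condexp_pi_prod (X : ∀ i, Ω i → ℝ) (hXmeas : ∀ i, Measurable (X i))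
    (K : ι → ℝ) (hK0 : ∀ i, 0 ≤ K i) (hXbdd : ∀ i x, |X i x| ≤ K i) :
    (fun ω => ∏ i, ((q i)[X i | m' i]) (ω i))
      =ᵐ[Measure.pi q]
      (Measure.pi q)[(fun ω => ∏ i, X i (ω i)) | MeasurableSpace.pi (m := m')] := by
  classical
  have hle := pi_le_pi m' hm'
  haveI : SigmaFinite ((Measure.pi q).trim hle) := inferInstance
  haveI : ∀ i, SigmaFinite ((q i).trim (hm' i)) := fun i => inferInstance
  set g : ∀ i, Ω i → ℝ := fun i => (q i)[X i | m' i] with hg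
  have hXint : ∀ i, Integrable (X i) (q i) := fun i =>
    Integrable.mono' (integrable_const (K i)) (hXmeas i).aestronglyMeasurable
      (Eventually.of_forall fun x => by simpa [Real.norm_eq_abs] using hXbdd i x)
  have hgbdd : ∀ i, ∀ᵐ x ∂q i, |g i x| ≤ K i := by
    intro i
    have := ae_bdd_condExp_of_ae_bdd (μ := q i) (m := m' i) (R := (K i).toNNReal)
      (f := X i) (Eventually.of_forall fun x => by
        simpa [Real.coe_toNNReal (K i) (hK0 i)] using hXbdd i x)
    simpa [Real.coe_toNNReal (K i) (hK0 i)] using this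
  have hgmeas : ∀ i, Measurable[mΩ i] (g i) :=
    fun i => ((stronglyMeasurable_condExp (m := m' i)).mono (hm' i)).measurable
  set h : (∀ i, Ω i) → ℝ := fun ω => ∏ i, g i (ω i) with hh
  have hYmeas : Measurable fun ω : ∀ i, Ω i => ∏ i, X i (ω i) :=
    Finset.measurable_prod _ fun i _ => (hXmeas i).comp (measurable_pi_apply i)
  have hYint : Integrable (fun ω : ∀ i, Ω i => ∏ i, X i (ω i)) (Measure.pi q) := by
    refine Integrable.mono' (integrable_const (∏ i, K i))
      hYmeas.aestronglyMeasurable (Eventually.of_forall fun ω => ?_)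
    rw [Real.norm_eq_abs, Finset.abs_prod]
    exact Finset.prod_le_prod (fun i _ => abs_nonneg _) (fun i _ => hXbdd i _)
  have hhmeas : Measurable h :=
    Finset.measurable_prod _ fun i _ => (hgmeas i).comp (measurable_pi_apply i)
  have hhbdd : ∀ᵐ ω ∂Measure.pi q, ∀ i, |g i (ω i)| ≤ K i := by
    rw [ae_all_iff]
    exact fun i => Measure.tendsto_eval_ae_ae.eventually (hgbdd i)
  have hhint : Integrable h (Measure.pi q) := by
    refine Integrable.mono' (integrable_const (∏ i, K i))
      hhmeas.aestronglyMeasurable ?_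
    filter_upwards [hhbdd] with ω hω
    rw [Real.norm_eq_abs, hh, Finset.abs_prod]
    exact Finset.prod_le_prod (fun i _ => abs_nonneg _) (fun i _ => hω i)
  have hhsm : AEStronglyMeasurable[MeasurableSpace.pi (m := m')] h (Measure.pi q) := by
    refine StronglyMeasurable.aestronglyMeasurable ?_
    refine Measurable.stronglyMeasurable ?_
    refine Finset.measurable_prod _ fun i _ => ?_
    exact ((stronglyMeasurable_condExp (m := m' i)).measurable).comp
      (@measurable_pi_apply ι Ω m' i)
  have hint_eq : ∀ s : Set (∀ i, Ω i), MeasurableSet[MeasurableSpace.pi (m := m')] s →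
      ∫ ω in s, h ω ∂Measure.pi q = ∫ ω in s, (∏ i, X i (ω i)) ∂Measure.pi q := by
    have huniv : ∫ ω, h ω ∂Measure.pi q = ∫ ω, (∏ i, X i (ω i)) ∂Measure.pi q := by
      have h1 := box_integral (q := q) g (fun i => hgmeas i) (fun _ => Set.univ)
        (fun _ => MeasurableSet.univ)
      have h2 := box_integral (q := q) X hXmeas (fun _ => Set.univ)
        (fun _ => MeasurableSet.univ)
      simp only [Set.pi_univ, Measure.restrict_univ] at h1 h2
      rw [h1, h2]
      refine Finset.prod_congr rfl fun i _ => ?_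
      exact integral_condExp (hm' i)
    intro s hs
    refine MeasurableSpace.induction_on_inter (m := MeasurableSpace.pi (m := m'))
      (C := fun s _ => ∫ ω in s, h ω ∂Measure.pi q
        = ∫ ω in s, (∏ i, X i (ω i)) ∂Measure.pi q)
      (@generateFrom_pi ι Ω _ m').symm (@isPiSystem_pi ι Ω m') ?_ ?_ ?_ ?_ _ hs
    · simp
    · rintro _ ⟨t, ht, rfl⟩
      have ht' : ∀ i, MeasurableSet[m' i] (t i) := fun i => ht i (Set.mem_univ i)
      have hbox1 := box_integral (q := q) g (fun i => hgmeas i) t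
        (fun i => hm' i _ (ht' i))
      have hbox2 := box_integral (q := q) X hXmeas t (fun i => hm' i _ (ht' i))
      rw [hbox1, hbox2]
      refine Finset.prod_congr rfl fun i _ => ?_
      exact setIntegral_condExp (hm' i) (hXint i) (ht' i)
    · intro t ht hC
      have ht' : MeasurableSet t := hle _ ht
      have e1 := integral_add_compl ht' hhint
      have e2 := integral_add_compl ht' hYint
      rw [huniv] at e1
      rw [← e2] at e1
      linarith [hC]
    · intro f hdisj hfm hC
      have hfm' : ∀ n, MeasurableSet (f n) := fun n => hle _ (hfm n)
      rw [integral_iUnion hfm' hdisj hhint.integrableOn,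
        integral_iUnion hfm' hdisj hYint.integrableOn]
      exact tsum_congr hC
  exact ae_eq_condExp_of_forall_setIntegral_eq hle hYint
    (fun s _ _ => hhint.integrableOn) (fun s hs _ => hint_eq s hs) hhsm

private lemma exists_sup_seq {α : Type*} [MeasurableSpace α] (P : Measure α)
    [IsProbabilityMeasure P] {κ : Type*} [Nonempty κ] (f : κ → α → ℝ)
    (hmeas : ∀ k, Measurable (f k)) (K : ℝ)
    (h0 : ∀ k x, 0 ≤ f k x) (hK : ∀ k x, f k x ≤ K) :
    ∃ u : ℕ → κ, ∀ k, f k ≤ᵐ[P] fun x => ⨆ n, f (u n) x := by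
  classical
  have hbddr : ∀ (v : ℕ → κ) (x : α), BddAbove (Set.range fun n => f (v n) x) :=
    fun v x => ⟨K, by rintro _ ⟨n, rfl⟩; exact hK _ _⟩
  have hsupmeas : ∀ v : ℕ → κ, Measurable fun x => ⨆ n, f (v n) x :=
    fun v => Measurable.iSup fun n => hmeas (v n)
  have hsup0 : ∀ (v : ℕ → κ) (x : α), 0 ≤ ⨆ n, f (v n) x :=
    fun v x => le_trans (h0 (v 0) x) (le_ciSup (hbddr v x) 0)
  have hsupK : ∀ (v : ℕ → κ) (x : α), (⨆ n, f (v n) x) ≤ K :=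
    fun v x => ciSup_le fun n => hK _ _
  have hsupint : ∀ v : ℕ → κ, Integrable (fun x => ⨆ n, f (v n) x) P := by
    intro v
    refine Integrable.mono' (integrable_const K) (hsupmeas v).aestronglyMeasurable
      (Eventually.of_forall fun x => ?_)
    rw [Real.norm_eq_abs, abs_le]
    have hK0 : (0:ℝ) ≤ K := (h0 (v 0) x).trans (hK (v 0) x)
    exact ⟨le_trans (by linarith) (hsup0 v x), hsupK v x⟩
  set S : (ℕ → κ) → ℝ := fun v => ∫ x, (⨆ n, f (v n) x) ∂P with hS
  set T : Set ℝ := Set.range S with hT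
  have hTne : T.Nonempty := ⟨S fun _ => Classical.arbitrary κ, ⟨_, rfl⟩⟩
  have hTbdd : BddAbove T := by
    refine ⟨K, ?_⟩
    rintro _ ⟨v, rfl⟩
    have h1 : S v ≤ ∫ _, K ∂P :=
      integral_mono (hsupint v) (integrable_const K) (fun x => hsupK v x)
    simpa using h1
  set c : ℝ := sSup T with hc
  have hchoice : ∀ m : ℕ, ∃ v : ℕ → κ, c - 1 / (m + 1) < S v := by
    intro m
    have hlt : c - 1 / (m + 1) < c := by
      have : (0:ℝ) < 1 / (m + 1) := by positivity
      linarith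
    obtain ⟨t, ht, hlt'⟩ := exists_lt_of_lt_csSup hTne hlt
    obtain ⟨v, rfl⟩ := ht
    exact ⟨v, hlt'⟩
  choose V hV using hchoice
  set U : ℕ → κ := fun n => V (Nat.unpair n).1 (Nat.unpair n).2 with hU
  refine ⟨U, ?_⟩
  set g : α → ℝ := fun x => ⨆ n, f (U n) x with hgdef
  have hSUle : S U ≤ c := le_csSup hTbdd ⟨U, rfl⟩
  have hSUge : ∀ m : ℕ, c - 1 / (m + 1) ≤ S U := by
    intro m
    refine le_trans (hV m).le ?_
    refine integral_mono (hsupint (V m)) (hsupint U) ?_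
    intro x
    refine ciSup_le fun n => ?_
    have : f (V m n) x = f (U (Nat.pair m n)) x := by
      simp [hU, Nat.unpair_pair]
    rw [this]
    exact le_ciSup (hbddr U x) (Nat.pair m n)
  have hSU : S U = c := by
    refine le_antisymm hSUle ?_
    by_contra hcon
    push_neg at hcon
    obtain ⟨m, hm⟩ := exists_nat_one_div_lt (by linarith : (0:ℝ) < c - S U)
    have := hSUge m
    have h1 : (1:ℝ) / (m + 1) < c - S U := by exact_mod_cast hm
    linarith
  intro k
  set W : ℕ → κ := fun n => Nat.rec k (fun m _ => U m) n with hW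
  set h : α → ℝ := fun x => ⨆ n, f (W n) x with hhdef
  have hmax : ∀ x, h x = max (f k x) (g x) := by
    intro x
    refine le_antisymm (ciSup_le fun n => ?_) (max_le ?_ ?_)
    · cases n with
      | zero => exact le_max_left _ _
      | succ m => exact le_trans (le_ciSup (hbddr U x) m) (le_max_right _ _)
    · exact le_ciSup (hbddr W x) 0
    · refine ciSup_le fun n => ?_
      have he : f (U n) x = f (W (n + 1)) x := rfl
      rw [he]
      exact le_ciSup (hbddr W x) (n + 1)
  have hgh : ∀ x, g x ≤ h x := fun x => by rw [hmax x]; exact le_max_right _ _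
  have hfh : ∀ x, f k x ≤ h x := fun x => by rw [hmax x]; exact le_max_left _ _
  have hSW : S W ≤ S U := by rw [hSU]; exact le_csSup hTbdd ⟨W, rfl⟩
  have hzero : (fun x => h x - g x) =ᵐ[P] 0 := by
    refine (integral_eq_zero_iff_of_nonneg (fun x => sub_nonneg.2 (hgh x))
      ((hsupint W).sub (hsupint U))).1 ?_
    refine le_antisymm ?_ (integral_nonneg fun x => sub_nonneg.2 (hgh x))
    rw [integral_sub (hsupint W) (hsupint U)]
    have : S W - S U ≤ 0 := by linarith
    exact this
  filter_upwards [hzero] with x hx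
  have hx' : h x - g x = 0 := hx
  have : h x = g x := by linarith
  exact le_of_le_of_eq (hfh x) this

end Helpers

/-- The family of product measures built from the marginal families `𝒬 i`. -/
def productFamily {ι : Type*} [Fintype ι] {Ω : ι → Type*}
    [mΩ : ∀ i, MeasurableSpace (Ω i)]
    (𝒬 : ∀ i, Set (Measure (Ω i))) : Set (Measure (∀ i, Ω i)) :=
  {Q | ∃ q : ∀ i, Measure (Ω i), ∃ hq : ∀ i, IsProbabilityMeasure (q i),
    (∀ i, q i ∈ 𝒬 i) ∧
    Q = by haveI := hq; exact Measure.pi q}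

/-- **Proposition 3.1 (iii) (independence).**  For the partially consistent
orthant nonlinear expectation `𝔈_S(X) = esssup_{Q ∈ 𝒬} E^Q(X | ℱ(S))`, with
`𝒬` the family of products of the marginal families `𝒬^{(m)}`, and
`Y(ω) = ∏_m X^{(m)}(ω^{(m)})` a product of nonnegative bounded marginal random
variables, `𝔈_S(Y) = ∏_m ℰ^{(m)}(X^{(m)} | ℱ^{(m)}_{S^{(m)}})` a.s. -/
theorem stmt13 {ι : Type*} [Fintype ι] {Ω : ι → Type*}
    (m' : ∀ i, MeasurableSpace (Ω i))
    [mΩ : ∀ i, MeasurableSpace (Ω i)]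
    (hm' : ∀ i, m' i ≤ mΩ i)
    (P : ∀ i, Measure (Ω i)) [∀ i, IsProbabilityMeasure (P i)]
    (𝒬 : ∀ i, Set (Measure (Ω i))) (h𝒬ne : ∀ i, (𝒬 i).Nonempty)
    (h𝒬 : ∀ i, ∀ q ∈ 𝒬 i, IsProbabilityMeasure q ∧ q ≪ P i ∧ P i ≪ q)
    -- the marginal nonlinear expectations `ℰ^{(m)}(· | ℱ^{(m)}_{S^{(m)}})`
    (Em : ∀ i, (Ω i → ℝ) → Ω i → ℝ)
    (hEmUB : ∀ i (X : Ω i → ℝ), ∀ q ∈ 𝒬 i, q[X | m' i] ≤ᵐ[P i] Em i X)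
    (hEmLeast : ∀ i (X : Ω i → ℝ) (Z : Ω i → ℝ),
      (∀ q ∈ 𝒬 i, q[X | m' i] ≤ᵐ[P i] Z) → Em i X ≤ᵐ[P i] Z)
    -- the orthant nonlinear expectation `𝔈_S`
    (ES : ((∀ i, Ω i) → ℝ) → (∀ i, Ω i) → ℝ)
    (hESUB : ∀ Y : (∀ i, Ω i) → ℝ, ∀ Q ∈ productFamily 𝒬,
      Q[Y | ⨆ i, (m' i).comap (fun ω => ω i)] ≤ᵐ[Measure.pi P] ES Y)
    (hESLeast : ∀ (Y : (∀ i, Ω i) → ℝ) (Z : (∀ i, Ω i) → ℝ),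
      (∀ Q ∈ productFamily 𝒬,
        Q[Y | ⨆ i, (m' i).comap (fun ω => ω i)] ≤ᵐ[Measure.pi P] Z) →
      ES Y ≤ᵐ[Measure.pi P] Z)
    -- the product random variable
    (X : ∀ i, Ω i → ℝ) (hXmeas : ∀ i, Measurable (X i))
    (hXpos : ∀ i ω, 0 ≤ X i ω) (hXbdd : ∀ i, ∃ K, ∀ ω, |X i ω| ≤ K) :
    ES (fun ω => ∏ i, X i (ω i)) =ᵐ[Measure.pi P]
      fun ω => ∏ i, Em i (X i) (ω i) := by
  classical
  choose K0 hK0 using hXbdd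
  set K : ι → ℝ := fun i => max (K0 i) 0 with hKdef
  have hK0' : ∀ i, 0 ≤ K i := fun i => le_max_right _ _
  have hXbdd' : ∀ i x, |X i x| ≤ K i := fun i x => (hK0 i x).trans (le_max_left _ _)
  -- the σ-algebra in the statement is the product σ-algebra of the `m' i`
  have hG : (⨆ i, (m' i).comap (fun ω : ∀ i, Ω i => ω i)) = MeasurableSpace.pi (m := m') := rfl
  -- truncated conditional expectations, indexed by the measures in the marginal families
  haveI hκne : ∀ i, Nonempty {r : Measure (Ω i) // r ∈ 𝒬 i} :=
    fun i => ⟨⟨(h𝒬ne i).choose, (h𝒬ne i).choose_spec⟩⟩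
  set f : ∀ i, {r : Measure (Ω i) // r ∈ 𝒬 i} → Ω i → ℝ :=
    fun i k x => min (max (((k.1)[X i | m' i]) x) 0) (K i) with hfdef
  have hf0 : ∀ i k x, 0 ≤ f i k x :=
    fun i k x => le_min (le_max_right _ _) (hK0' i)
  have hfK : ∀ i k x, f i k x ≤ K i := fun i k x => min_le_right _ _
  have hfmeas : ∀ i k, Measurable (f i k) := fun i k =>
    (((stronglyMeasurable_condExp (m := m' i)).mono (hm' i)).measurable.max
      measurable_const).min measurable_const
  -- the truncation is a.e. (w.r.t. `P i`) equal to the conditional expectation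
  have htrunc_eq : ∀ i (r : Measure (Ω i)) (hr : r ∈ 𝒬 i),
      f i ⟨r, hr⟩ =ᵐ[P i] r[X i | m' i] := by
    intro i r hr
    haveI : IsProbabilityMeasure r := (h𝒬 i r hr).1
    have hXint : Integrable (X i) r :=
      Integrable.mono' (integrable_const (K i)) (hXmeas i).aestronglyMeasurable
        (Eventually.of_forall fun x => by simpa [Real.norm_eq_abs] using hXbdd' i x)
    have h1 : ∀ᵐ x ∂r, 0 ≤ (r[X i | m' i]) x :=
      condExp_nonneg (Eventually.of_forall fun x => hXpos i x)
    have h2 : ∀ᵐ x ∂r, |(r[X i | m' i]) x| ≤ K i := by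
      have := ae_bdd_condExp_of_ae_bdd (μ := r) (m := m' i) (R := (K i).toNNReal)
        (f := X i) (Eventually.of_forall fun x => by
          simpa [Real.coe_toNNReal (K i) (hK0' i)] using hXbdd' i x)
      simpa [Real.coe_toNNReal (K i) (hK0' i)] using this
    have h3 : ∀ᵐ x ∂P i, 0 ≤ (r[X i | m' i]) x := (h𝒬 i r hr).2.2.ae_le h1
    have h4 : ∀ᵐ x ∂P i, |(r[X i | m' i]) x| ≤ K i := (h𝒬 i r hr).2.2.ae_le h2
    filter_upwards [h3, h4] with x hx1 hx2
    have hx3 : (r[X i | m' i]) x ≤ K i := (abs_le.1 hx2).2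
    simp [hfdef, max_eq_left hx1, min_eq_left hx3]
  -- choose countable families attaining the essential suprema
  have hseq : ∀ i, ∃ u : ℕ → {r : Measure (Ω i) // r ∈ 𝒬 i},
      ∀ k, f i k ≤ᵐ[P i] fun x => ⨆ n, f i (u n) x :=
    fun i => exists_sup_seq (P i) (f i) (hfmeas i) (K i) (hf0 i) (hfK i)
  choose u hu using hseq
  set g : ∀ i, Ω i → ℝ := fun i x => ⨆ n, f i (u i n) x with hgdef
  -- the marginal nonlinear expectations agree a.e. with the countable suprema
  have hEmg : ∀ i, Em i (X i) =ᵐ[P i] g i := by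
    intro i
    refine EventuallyLE.antisymm ?_ ?_
    · refine hEmLeast i (X i) (g i) (fun r hr => ?_)
      exact ((htrunc_eq i r hr).symm.le).trans (hu i ⟨r, hr⟩)
    · have hn : ∀ n : ℕ, f i (u i n) ≤ᵐ[P i] Em i (X i) := fun n =>
        ((htrunc_eq i _ (u i n).2).le).trans (hEmUB i (X i) _ (u i n).2)
      have hall := ae_all_iff.2 hn
      filter_upwards [hall] with x hx
      exact ciSup_le fun n => hx n
  set Y : (∀ i, Ω i) → ℝ := fun ω => ∏ i, X i (ω i) with hYdef
  -- upper bound: `ES Y ≤ ∏ Em` a.e.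
  have hupper : ES Y ≤ᵐ[Measure.pi P] fun ω => ∏ i, Em i (X i) (ω i) := by
    refine hESLeast Y _ ?_
    rintro Q ⟨q, hqprob, hqmem, rfl⟩
    haveI := hqprob
    have hfact := condexp_pi_prod m' hm' q X hXmeas K hK0' hXbdd'
    have hac : Measure.pi P ≪ Measure.pi q :=
      absolutelyContinuous_pi P q (fun i => (h𝒬 i _ (hqmem i)).2.2)
    have hfact' : (fun ω => ∏ i, ((q i)[X i | m' i]) (ω i))
        =ᵐ[Measure.pi P] (Measure.pi q)[Y | MeasurableSpace.pi (m := m')] :=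
      hac.ae_eq hfact
    have hcoord : ∀ i, ∀ᵐ ω ∂Measure.pi P,
        0 ≤ ((q i)[X i | m' i]) (ω i) ∧ ((q i)[X i | m' i]) (ω i) ≤ Em i (X i) (ω i) := by
      intro i
      have h1 : ∀ᵐ x ∂P i, 0 ≤ ((q i)[X i | m' i]) x :=
        (h𝒬 i _ (hqmem i)).2.2.ae_le
          (condExp_nonneg (Eventually.of_forall fun x => hXpos i x))
      have h2 := hEmUB i (X i) _ (hqmem i)
      have hae : ∀ᵐ x ∂P i,
          0 ≤ ((q i)[X i | m' i]) x ∧ ((q i)[X i | m' i]) x ≤ Em i (X i) x := by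
        filter_upwards [h1, h2] with x hx1 hx2
        exact ⟨hx1, hx2⟩
      exact (Measure.tendsto_eval_ae_ae (μ := P)).eventually hae
    have hall := ae_all_iff.2 hcoord
    filter_upwards [hfact', hall] with ω h1 h2
    have hgoal : ((Measure.pi q)[Y | MeasurableSpace.pi (m := m')]) ω
        ≤ ∏ i, Em i (X i) (ω i) := by
      rw [← h1]
      exact Finset.prod_le_prod (fun i _ => (h2 i).1) (fun i _ => (h2 i).2)
    exact hgoal
  -- lower bound: `∏ Em ≤ ES Y` a.e.
  have hlower : (fun ω => ∏ i, Em i (X i) (ω i)) ≤ᵐ[Measure.pi P] ES Y := by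
    have hEmg' : ∀ i, ∀ᵐ ω ∂Measure.pi P, Em i (X i) (ω i) = g i (ω i) := fun i =>
      (Measure.tendsto_eval_ae_ae (μ := P)).eventually (hEmg i)
    have hEmgall := ae_all_iff.2 hEmg'
    have hσ : ∀ σ : ι → ℕ, ∀ᵐ ω ∂Measure.pi P,
        (∏ i, f i (u i (σ i)) (ω i)) ≤ ES Y ω := by
      intro σ
      set qσ : ∀ i, Measure (Ω i) := fun i => (u i (σ i)).1 with hqσ
      haveI hqσp : ∀ i, IsProbabilityMeasure (qσ i) :=
        fun i => (h𝒬 i _ (u i (σ i)).2).1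
      have hmem : Measure.pi qσ ∈ productFamily 𝒬 :=
        ⟨qσ, hqσp, fun i => (u i (σ i)).2, rfl⟩
      have hub := hESUB Y _ hmem
      have hfact := condexp_pi_prod m' hm' qσ X hXmeas K hK0' hXbdd'
      have hac : Measure.pi P ≪ Measure.pi qσ :=
        absolutelyContinuous_pi P qσ (fun i => (h𝒬 i _ (u i (σ i)).2).2.2)
      have hfact' : (fun ω => ∏ i, ((qσ i)[X i | m' i]) (ω i))
          =ᵐ[Measure.pi P] (Measure.pi qσ)[Y | MeasurableSpace.pi (m := m')] :=
        hac.ae_eq hfact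
      have htr : ∀ i, ∀ᵐ ω ∂Measure.pi P,
          f i (u i (σ i)) (ω i) = ((qσ i)[X i | m' i]) (ω i) := fun i =>
        (Measure.tendsto_eval_ae_ae (μ := P)).eventually (htrunc_eq i _ (u i (σ i)).2)
      have htrall := ae_all_iff.2 htr
      filter_upwards [hub, hfact', htrall] with ω h1 h2 h3
      calc (∏ i, f i (u i (σ i)) (ω i)) = ∏ i, ((qσ i)[X i | m' i]) (ω i) :=
            Finset.prod_congr rfl fun i _ => h3 i
      _ = ((Measure.pi qσ)[Y | MeasurableSpace.pi (m := m')]) ω := h2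
      _ ≤ ES Y ω := h1
    have hσall := ae_all_iff.2 hσ
    filter_upwards [hσall, hEmgall] with ω hωσ hωg
    have hsup : (∏ i, g i (ω i)) ≤ ES Y ω := by
      refine prod_ciSup_le (fun i n => f i (u i n) (ω i)) K
        (fun i n => hf0 i _ _) (fun i n => hfK i _ _) (fun σ => hωσ σ)
    calc (∏ i, Em i (X i) (ω i)) = ∏ i, g i (ω i) :=
          Finset.prod_congr rfl fun i _ => hωg i
    _ ≤ ES Y ω := hsup
  exact hupper.antisymm hlower
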